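/- Let M be a primitive monoid, let P be its set of prime elements, and define q ◁ p for p, q ∈ P by p + q = p. Then ◁ is a transitive antisymmetric relation on P, and M is isomorphic to M(P,◁), the quotient of the free commutative monoid on P by the smallest monoid congruence identifying p with p + q whenever q ◁ p. -/

import Mathlib

/-- The algebraic preorder on a commutative monoid: `x ≤ y` iff `∃ z, y = x + z`. -/
def AlgLE {M : Type*} [AddCommMonoid M] (x y : M) : Prop := ∃ z, y = x + z

/-- A monoid is conical if `x + y = 0` implies `x = 0` and `y = 0`. -/
def IsConical (M : Type*) [AddCommMonoid M] : Prop := ∀ x y : M, x + y = 0 → x = 0 ∧ y = 0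

/-- A refinement monoid: every equality `a + b = c + d` admits a refinement. -/
def IsRefinement (M : Type*) [AddCommMonoid M] : Prop :=
  ∀ a b c d : M, a + b = c + d →
    ∃ x y z w : M, a = x + y ∧ b = z + w ∧ c = x + z ∧ d = y + w

/-- Separative: `a + a = a + b` and `b + b = a + b` imply `a = b`. -/
def IsSeparative (M : Type*) [AddCommMonoid M] : Prop :=
  ∀ a b : M, a + a = a + b → b + b = a + b → a = b

/-- A prime element: `p ≠ 0` and `p ≤ a + b` implies `p ≤ a` or `p ≤ b`
(algebraic preorder). -/
def IsPrimeElem {M : Type*} [AddCommMonoid M] (p : M) : Prop :=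
  p ≠ 0 ∧ ∀ a b : M, AlgLE p (a + b) → AlgLE p a ∨ AlgLE p b

/-- Primely generated: every element is a finite sum of prime elements. -/
def PrimelyGenerated (M : Type*) [AddCommMonoid M] : Prop :=
  ∀ x : M, ∃ l : Multiset M, (∀ p ∈ l, IsPrimeElem p) ∧ x = l.sum

/-- Antisymmetric: the algebraic preorder is a partial order. -/
def IsAntisymmetric (M : Type*) [AddCommMonoid M] : Prop :=
  ∀ x y : M, AlgLE x y → AlgLE y x → x = y

/-- A primitive monoid: an antisymmetric, primely generated refinement monoid. -/
def IsPrimitive (M : Type*) [AddCommMonoid M] : Prop :=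
  IsAntisymmetric M ∧ PrimelyGenerated M ∧ IsRefinement M

/-- The defining relations of `M(P, ◁)`: `p = p + q` whenever `q ◁ p`.
(The free commutative monoid on `P` is `Multiset P`.) -/
def primRel (P : Type) (lt : P → P → Prop) : Multiset P → Multiset P → Prop :=
  fun x y => ∃ p q : P, lt q p ∧ x = ({p} : Multiset P) ∧
    y = ({p} : Multiset P) + ({q} : Multiset P)

/-- The monoid `M(P, ◁)`: quotient of the free commutative monoid on `P` by the
smallest monoid congruence identifying `p` with `p + q` whenever `q ◁ p`. -/
abbrev PrimMonoid (P : Type) (lt : P → P → Prop) := (addConGen (primRel P lt)).Quotient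


section Aux
variable {M : Type} [AddCommMonoid M]

lemma algle_refl (x : M) : AlgLE x x := ⟨0, (add_zero x).symm⟩

lemma algle_trans {x y z : M} (h1 : AlgLE x y) (h2 : AlgLE y z) : AlgLE x z := by
  obtain ⟨a, rfl⟩ := h1; obtain ⟨b, rfl⟩ := h2; exact ⟨a + b, add_assoc _ _ _⟩

lemma algle_add (x z : M) : AlgLE x (x + z) := ⟨z, rfl⟩

lemma algle_of_mem {l : Multiset M} {r : M} (h : r ∈ l) : AlgLE r l.sum := by
  classical
  exact ⟨(l.erase r).sum, by rw [← Multiset.sum_cons, Multiset.cons_erase h]⟩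

lemma conical (hA : IsAntisymmetric M) {x y : M} (h : x + y = 0) : x = 0 :=
  (hA 0 x ⟨x, (zero_add x).symm⟩ ⟨y, h.symm⟩).symm

lemma prime_le_sum (hA : IsAntisymmetric M) {p : M} (hp : IsPrimeElem p) :
    ∀ l : Multiset M, AlgLE p l.sum → ∃ q ∈ l, AlgLE p q := by
  intro l
  induction l using Multiset.induction_on with
  | empty =>
    intro ⟨z, hz⟩
    simp only [Multiset.sum_zero] at hz
    exact absurd (conical hA hz.symm) hp.1
  | cons a s ih =>
    intro h
    rw [Multiset.sum_cons] at h
    rcases hp.2 _ _ h with h' | h'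
    · exact ⟨a, Multiset.mem_cons_self a s, h'⟩
    · obtain ⟨q, hq, hq'⟩ := ih h'
      exact ⟨q, Multiset.mem_cons_of_mem hq, hq'⟩

lemma absorb_sum {p : M} : ∀ l : Multiset M, (∀ r ∈ l, p + r = p) → p + l.sum = p := by
  intro l
  induction l using Multiset.induction_on with
  | empty => simp
  | cons a s ih =>
    intro h
    rw [Multiset.sum_cons]
    calc p + (a + s.sum) = (p + s.sum) + a := by abel
    _ = p + a := by rw [ih (fun r hr => h r (Multiset.mem_cons_of_mem hr))]
    _ = p := h a (Multiset.mem_cons_self a s)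

lemma lemC (hA : IsAntisymmetric M) {p q : M} (hp : IsPrimeElem p) (h : AlgLE q p) :
    q = p ∨ p + q = p := by
  obtain ⟨z, hz⟩ := h
  rcases hp.2 q z ⟨0, by rw [add_zero, hz]⟩ with h' | h'
  · exact Or.inl (hA q p ⟨z, hz⟩ h')
  · obtain ⟨w, hw⟩ := h'
    right
    have hpq : p = q + (p + w) := by conv_lhs => rw [hz, hw]
    have hpq2 : p = (p + q) + w := hpq.trans (by abel)
    exact hA (p + q) p ⟨w, hpq2⟩ (algle_add p q)

lemma lemF (hA : IsAntisymmetric M) (hG : PrimelyGenerated M) {p c : M}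
    (hp : IsPrimeElem p) (h : AlgLE c p) : c = p ∨ p + c = p := by
  obtain ⟨l, hl, rfl⟩ := hG c
  by_cases hex : ∃ r ∈ l, r = p
  · obtain ⟨r, hr, rfl⟩ := hex
    exact Or.inl (hA _ _ h (algle_of_mem hr))
  · push_neg at hex
    right
    refine absorb_sum l (fun r hr => ?_)
    rcases lemC hA hp (algle_trans (algle_of_mem hr) h) with h' | h'
    · exact absurd h' (hex r hr)
    · exact h'

lemma lemE2 (hA : IsAntisymmetric M) (hG : PrimelyGenerated M) (hR : IsRefinement M)
    {p a b : M} (hp : IsPrimeElem p) (h : a + p = b + p) :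
    ∃ u y z, a = u + y ∧ b = u + z ∧ p + y = p ∧ p + z = p := by
  obtain ⟨x, y, z, w, ha, hzw, hb, hyw⟩ := hR a p b p h
  rcases lemF hA hG hp ⟨w, hzw⟩ with hz | hz
  · -- z = p
    have hw : p + w = p := by rw [hz] at hzw; exact hzw.symm
    rcases lemF hA hG hp ⟨w, hyw⟩ with hy | hy
    · exact ⟨x + p, 0, 0, by rw [add_zero, ha, hy], by rw [add_zero, hb, hz], by rw [add_zero], by rw [add_zero]⟩
    · exact ⟨x + y, 0, w, by rw [add_zero, ha], by rw [hb, hz, hyw]; abel, by rw [add_zero], hw⟩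
  · rcases lemF hA hG hp ⟨w, hyw⟩ with hy | hy
    · -- y = p
      have hw : p + w = p := by rw [hy] at hyw; exact hyw.symm
      exact ⟨x + z, w, 0, by rw [ha, hy, hzw]; abel, by rw [add_zero, hb], hw, by rw [add_zero]⟩
    · exact ⟨x, y, z, ha, hb, hy, hz⟩

lemma lemGC (hA : IsAntisymmetric M) (hG : PrimelyGenerated M) (hR : IsRefinement M)
    {x a b : M} (hx : IsPrimeElem x) (hfree : x + x ≠ x)
    (ha : ¬ AlgLE x a) (hb : ¬ AlgLE x b) :
    ∀ (m : ℕ) {c d : M}, x + c = x → x + d = x → ∀ n : ℕ,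
      m • x + (a + c) = n • x + (b + d) → m = n := by
  have absle : ∀ {c : M}, x + c = x → ¬ AlgLE x c := by
    intro c hc hle
    have : c = x := hA c x ⟨x, by rw [add_comm x c] at hc; rw [hc]⟩ hle
    exact hfree (by rw [← this] at hc ⊢; exact hc)
  intro m
  induction m with
  | zero =>
    intro c d hc hd n h
    cases n with
    | zero => rfl
    | succ n' =>
      exfalso
      rw [zero_nsmul, zero_add] at h
      have : AlgLE x (a + c) := by
        rw [h, succ_nsmul, add_comm (n' • x) x, add_assoc]
        exact algle_add x _
      rcases hx.2 a c this with h' | h'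
      · exact ha h'
      · exact absle hc h'
  | succ m' ih =>
    intro c d hc hd n h
    cases n with
    | zero =>
      exfalso
      rw [zero_nsmul, zero_add] at h
      have : AlgLE x (b + d) := by
        rw [← h, succ_nsmul, add_comm (m' • x) x, add_assoc]
        exact algle_add x _
      rcases hx.2 b d this with h' | h'
      · exact hb h'
      · exact absle hd h'
    | succ n' =>
      have h' : (m' • x + (a + c)) + x = (n' • x + (b + d)) + x := by
        rw [succ_nsmul, succ_nsmul] at h
        calc m' • x + (a + c) + x = (m' • x + x) + (a + c) := by abel
        _ = (n' • x + x) + (b + d) := h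
        _ = n' • x + (b + d) + x := by abel
      obtain ⟨u, y, z, h1, h2, hy, hz⟩ := lemE2 hA hG hR hx h'
      have key : m' • x + (a + (c + z)) = n' • x + (b + (d + y)) := by
        calc m' • x + (a + (c + z)) = (m' • x + (a + c)) + z := by abel
        _ = u + y + z := by rw [h1]
        _ = u + z + y := by abel
        _ = (n' • x + (b + d)) + y := by rw [← h2]
        _ = n' • x + (b + (d + y)) := by abel
      have hcz : x + (c + z) = x := by rw [← add_assoc, hc, hz]
      exact congrArg Nat.succ (ih hcz (by rw [← add_assoc, hd, hy]) n' key)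


section Main2
variable {M : Type} [AddCommMonoid M]

def Psum (σ : Multiset {x : M // IsPrimeElem x}) : M := (σ.map Subtype.val).sum

def Reduced (σ : Multiset {x : M // IsPrimeElem x}) : Prop :=
  ∀ (q p : {x : M // IsPrimeElem x}) (ρ : Multiset {x : M // IsPrimeElem x}),
    σ = q ::ₘ p ::ₘ ρ → (p : M) + (q : M) ≠ (p : M)

lemma Psum_zero : Psum (0 : Multiset {x : M // IsPrimeElem x}) = 0 := rfl

lemma Psum_cons (q : {x : M // IsPrimeElem x}) (σ : Multiset {x : M // IsPrimeElem x}) :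
    Psum (q ::ₘ σ) = (q : M) + Psum σ := by
  simp [Psum]

lemma Psum_add (σ τ : Multiset {x : M // IsPrimeElem x}) :
    Psum (σ + τ) = Psum σ + Psum τ := by
  simp [Psum]

lemma mem_le_Psum {σ : Multiset {x : M // IsPrimeElem x}} {q : {x : M // IsPrimeElem x}}
    (h : q ∈ σ) : AlgLE (q : M) (Psum σ) := by
  classical
  exact ⟨Psum (σ.erase q), by rw [← Psum_cons, Multiset.cons_erase h]⟩

lemma prime_le_Psum (hA : IsAntisymmetric M) {σ : Multiset {x : M // IsPrimeElem x}} {p : M}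
    (hp : IsPrimeElem p) (h : AlgLE p (Psum σ)) :
    ∃ q ∈ σ, AlgLE p (q : M) := by
  obtain ⟨q', hq', hle⟩ := prime_le_sum hA hp _ h
  obtain ⟨q, hq, rfl⟩ := Multiset.mem_map.mp hq'
  exact ⟨q, hq, hle⟩

lemma reduced_no_absorb {σ : Multiset {x : M // IsPrimeElem x}}
    (hred : Reduced σ) {q p : {x : M // IsPrimeElem x}} (hq : q ∈ σ) (hp : p ∈ σ)
    (hne : p ≠ q) (habs : (p : M) + (q : M) = (p : M)) : False := by
  classical
  have hp' : p ∈ σ.erase q := (Multiset.mem_erase_of_ne hne).mpr hp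
  exact hred q p ((σ.erase q).erase p)
    (by rw [Multiset.cons_erase hp', Multiset.cons_erase hq]) habs

lemma reduced_count_reg [DecidableEq {x : M // IsPrimeElem x}]
    {σ : Multiset {x : M // IsPrimeElem x}}
    (hred : Reduced σ) {x : {x : M // IsPrimeElem x}} (hx : x ∈ σ)
    (hreg : (x : M) + (x : M) = (x : M)) : σ.count x = 1 := by
  classical
  refine le_antisymm ?_ (Multiset.count_pos.mpr hx)
  by_contra hc
  push_neg at hc
  obtain ⟨ρ, hρ⟩ := Multiset.le_iff_exists_add.mp
    (Multiset.le_count_iff_replicate_le.mp hc)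
  refine hred x x ρ ?_ hreg
  rw [hρ]
  simp [Multiset.replicate_succ]

lemma not_le_filter (hA : IsAntisymmetric M) {σ : Multiset {x : M // IsPrimeElem x}}
    [DecidableEq {x : M // IsPrimeElem x}]
    (hred : Reduced σ) {x : {x : M // IsPrimeElem x}} (hx : x ∈ σ) :
    ¬ AlgLE (x : M) (Psum (σ.filter (fun q => ¬ q = x))) := by
  intro hle
  obtain ⟨q, hq, hxq⟩ := prime_le_Psum hA x.2 hle
  have hq' := Multiset.of_mem_filter hq
  have hqσ := Multiset.mem_filter.mp hq
  rcases lemC hA q.2 hxq with heq | habs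
  · exact hq' (Subtype.ext heq.symm)
  · exact reduced_no_absorb hred hx hqσ.1 hq' habs

lemma Psum_split [DecidableEq {x : M // IsPrimeElem x}]
    (σ : Multiset {x : M // IsPrimeElem x}) (x : {x : M // IsPrimeElem x}) :
    Psum σ = σ.count x • (x : M) + Psum (σ.filter (fun q => ¬ q = x)) := by
  conv_lhs => rw [← Multiset.filter_add_not (fun q => q = x) σ]
  rw [Psum_add, Multiset.filter_eq', ]
  congr 1
  simp [Psum, Multiset.map_replicate]

lemma reduced_eq (hA : IsAntisymmetric M) (hG : PrimelyGenerated M) (hR : IsRefinement M) :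
    ∀ {σ τ : Multiset {x : M // IsPrimeElem x}}, Reduced σ → Reduced τ →
      Psum σ = Psum τ → σ = τ := by
  classical
  have mem_tr : ∀ {σ τ : Multiset {x : M // IsPrimeElem x}}, Reduced σ →
      Psum σ = Psum τ → ∀ x ∈ σ, x ∈ τ := by
    intro σ τ hσ h x hx
    have h1 : AlgLE (x : M) (Psum τ) := h ▸ mem_le_Psum hx
    obtain ⟨q, hq, hxq⟩ := prime_le_Psum hA x.2 h1
    have h2 : AlgLE (q : M) (Psum σ) := h.symm ▸ mem_le_Psum hq
    obtain ⟨p', hp', hqp'⟩ := prime_le_Psum hA q.2 h2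
    by_cases hxp : (x : M) = (p' : M)
    · have : q = x := Subtype.ext (hA _ _ (hxp ▸ hqp') hxq)
      exact this ▸ hq
    · rcases lemC hA p'.2 (algle_trans hxq hqp') with heq | habs
      · exact absurd heq hxp
      · exact absurd habs (fun hh => reduced_no_absorb hσ hx hp'
          (fun he => hxp (congrArg Subtype.val he).symm) hh)
  intro σ τ hσ hτ h
  ext x
  by_cases hx : x ∈ σ
  · have hxτ : x ∈ τ := mem_tr hσ h x hx
    by_cases hreg : (x : M) + (x : M) = (x : M)
    · rw [reduced_count_reg hσ hx hreg, reduced_count_reg hτ hxτ hreg]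
    · -- free prime: use lemGC
      have hs : σ.count x • (x : M) + (Psum (σ.filter (fun q => ¬ q = x)) + 0)
          = τ.count x • (x : M) + (Psum (τ.filter (fun q => ¬ q = x)) + 0) := by
        rw [add_zero, add_zero, ← Psum_split, ← Psum_split, h]
      exact lemGC hA hG hR x.2 hreg (not_le_filter hA hσ hx) (not_le_filter hA hτ hxτ)
        (σ.count x) (add_zero _) (add_zero _) (τ.count x) hs
  · have hxτ : x ∉ τ := fun hxτ => hx (mem_tr hτ h.symm x hxτ)
    rw [Multiset.count_eq_zero.mpr hx, Multiset.count_eq_zero.mpr hxτ]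

lemma reduce (σ : Multiset {x : M // IsPrimeElem x}) :
    ∃ σ', (addConGen (primRel {x : M // IsPrimeElem x}
        (fun q p => (p : M) + (q : M) = (p : M)))) σ σ' ∧ Reduced σ' ∧ Psum σ' = Psum σ := by
  set c := addConGen (primRel {x : M // IsPrimeElem x}
      (fun q p => (p : M) + (q : M) = (p : M))) with hc
  induction σ using Multiset.strongInductionOn with
  | ih σ ih =>
    by_cases hred : ∃ (q p : {x : M // IsPrimeElem x})
        (ρ : Multiset {x : M // IsPrimeElem x}),
        σ = q ::ₘ p ::ₘ ρ ∧ (p : M) + (q : M) = (p : M)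
    · obtain ⟨q, p, ρ, hσeq, habs⟩ := hred
      have base : c ({p} : Multiset _) ({p} + {q}) :=
        AddConGen.Rel.of _ _ ⟨p, q, habs, rfl, rfl⟩
      have step : c (ρ + {p}) (ρ + ({p} + {q})) := c.add (c.refl ρ) base
      have e1 : q ::ₘ p ::ₘ ρ = ρ + ({p} + {q}) := by
        rw [← Multiset.singleton_add, ← Multiset.singleton_add]
        abel
      have e2 : ρ + ({p} : Multiset _) = p ::ₘ ρ := by
        rw [← Multiset.singleton_add]; exact add_comm _ _
      have rel1 : c σ (p ::ₘ ρ) := by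
        rw [hσeq, e1, ← e2]; exact c.symm step
      obtain ⟨σ'', hcσ, hrσ, hsσ⟩ := ih (p ::ₘ ρ) (by rw [hσeq]; exact Multiset.lt_cons_self _ q)
      refine ⟨σ'', c.trans rel1 hcσ, hrσ, ?_⟩
      rw [hsσ, hσeq, Psum_cons, Psum_cons, Psum_cons, ← add_assoc, add_comm (q : M) (p : M), habs]
    · exact ⟨σ, c.refl σ, fun q p ρ h1 h2 => hred ⟨q, p, ρ, h1, h2⟩, rfl⟩


end Main2

/-- Every primitive monoid `M` is determined by its set `P` of primes together with
the transitive antisymmetric relation `q ◁ p ↔ p + q = p`: the relation is indeed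
transitive and antisymmetric, and `M ≅ M(P, ◁)`. -/
theorem statement8 (M : Type) [AddCommMonoid M] (hM : IsPrimitive M) :
    let P := {x : M // IsPrimeElem x}
    let lt : P → P → Prop := fun q p => (p : M) + (q : M) = (p : M)
    (∀ a b c : P, lt a b → lt b c → lt a c) ∧
    (∀ a b : P, lt a b → lt b a → a = b) ∧
    Nonempty (M ≃+ PrimMonoid P lt) := by
  intro P lt
  obtain ⟨hA, hG, hR⟩ := hM
  refine ⟨?_, ?_, ?_⟩
  · intro a b c hab hbc
    show (c : M) + (a : M) = (c : M)
    conv_lhs => rw [← hbc]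
    rw [add_assoc, hab, hbc]
  · intro a b hab hba
    refine Subtype.ext ?_
    calc (a : M) = (a : M) + (b : M) := hba.symm
    _ = (b : M) + (a : M) := add_comm _ _
    _ = (b : M) := hab
  · set r := primRel P lt with hr
    set c := addConGen r with hc
    let sumHom : Multiset P →+ M :=
      { toFun := Psum, map_zero' := rfl,
        map_add' := fun σ τ => by simp [Psum] }
    have hker : c ≤ AddCon.ker sumHom := by
      refine AddCon.addConGen_le.mpr ?_
      rintro x y ⟨p, q, hlt, rfl, rfl⟩
      rw [AddCon.ker_rel]
      show Psum {p} = Psum ({p} + {q})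
      have : (p : M) + (q : M) = (p : M) := hlt
      simp [Psum, this]
    let f : c.Quotient →+ M := c.lift sumHom hker
    have surj : Function.Surjective f := by
      intro m
      obtain ⟨l, hl, rfl⟩ := hG m
      refine ⟨((l.attach.map fun z => (⟨z.1, hl z.1 z.2⟩ : P)) : Multiset P), ?_⟩
      rw [AddCon.lift_coe]
      show Psum _ = l.sum
      rw [Psum, Multiset.map_map]
      congr 1
      exact (Multiset.attach_map_val' l (fun x => x)).trans (Multiset.map_id l)
    have inj : Function.Injective f := by
      intro q1 q2 hq
      refine AddCon.induction_on₂ q1 q2 (fun σ τ h => ?_) hq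
      have hpsum : Psum σ = Psum τ := by
        rwa [AddCon.lift_coe, AddCon.lift_coe] at h
      obtain ⟨σ₀, hcσ, hrσ, hsσ⟩ := reduce σ
      obtain ⟨τ₀, hcτ, hrτ, hsτ⟩ := reduce τ
      have heq : σ₀ = τ₀ :=
        reduced_eq hA hG hR hrσ hrτ (hsσ.trans (hpsum.trans hsτ.symm))
      exact (AddCon.eq c).mpr (c.trans hcσ (heq ▸ c.symm hcτ))
    exact ⟨(AddEquiv.ofBijective f ⟨inj, surj⟩).symm⟩
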